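/- For positive semidefinite matrices X ≤ Y on ℂ^n and s ∈ [0,1], one has X^s ≤ Y^s (operator monotonicity of the power function x ↦ x^s on [0,1]). -/

import Mathlib

open scoped ComplexOrder

/-- Functional calculus for Hermitian matrices (junk value `0` off the Hermitian matrices). -/
noncomputable def cfcM {d : ℕ} (f : ℝ → ℝ) (A : Matrix (Fin d) (Fin d) ℂ) :
    Matrix (Fin d) (Fin d) ℂ :=
  if h : A.IsHermitian then
    (h.eigenvectorUnitary : Matrix (Fin d) (Fin d) ℂ) *
      Matrix.diagonal (fun i => (f (h.eigenvalues i) : ℂ)) *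
      (star (h.eigenvectorUnitary : Matrix (Fin d) (Fin d) ℂ))
  else 0

/-- Real power of a (positive) Hermitian matrix via functional calculus. -/
noncomputable def mpow {d : ℕ} (A : Matrix (Fin d) (Fin d) ℂ) (s : ℝ) :
    Matrix (Fin d) (Fin d) ℂ := cfcM (fun x => x ^ s) A

section ScalarAux

open MeasureTheory Real Set

lemma lh_integrableOn_aux {s : ℝ} (hs0 : 0 < s) (hs1 : s < 1) {t : ℝ} (ht : 0 < t) :
    IntegrableOn (fun l : ℝ => l ^ (s-1) * (t / (t + l))) (Ioi 0) := by
  have hsplit : Ioc (0:ℝ) 1 ∪ Ioi 1 = Ioi 0 := Ioc_union_Ioi_eq_Ioi zero_le_one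
  rw [← hsplit]
  have hcont : ∀ (S : Set ℝ), S ⊆ Ioi 0 →
      ContinuousOn (fun l : ℝ => l ^ (s-1) * (t / (t + l))) S := by
    intro S hS
    apply ContinuousOn.mul
    · exact (continuousOn_id.rpow_const (fun x hx => Or.inl (ne_of_gt (hS hx))))
    · exact continuousOn_const.div (continuousOn_const.add continuousOn_id)
        (fun x hx => by have := hS hx; simp only [Set.mem_Ioi] at this; positivity)
  apply IntegrableOn.union
  · have hbase : IntegrableOn (fun l : ℝ => l ^ (s-1)) (Ioc (0:ℝ) 1) := by
      have := intervalIntegral.intervalIntegrable_rpow' (a := 0) (b := 1) (r := s - 1)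
        (by linarith)
      rwa [intervalIntegrable_iff_integrableOn_Ioc_of_le zero_le_one] at this
    apply Integrable.mono' hbase
    · exact ((hcont _ Ioc_subset_Ioi_self).aestronglyMeasurable measurableSet_Ioc)
    · filter_upwards [ae_restrict_mem measurableSet_Ioc] with l hl
      have hl0 : 0 < l := hl.1
      have h1 : t / (t + l) ≤ 1 := by
        rw [div_le_one (by positivity)]; linarith
      have h2 : 0 ≤ t / (t + l) := by positivity
      rw [norm_mul, norm_of_nonneg (rpow_nonneg hl0.le _), norm_of_nonneg h2]
      nth_rewrite 2 [← mul_one (l ^ (s-1))]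
      exact mul_le_mul_of_nonneg_left h1 (rpow_nonneg hl0.le _)
  · have hbase : IntegrableOn (fun l : ℝ => t * l ^ (s-2)) (Ioi (1:ℝ)) :=
      (integrableOn_Ioi_rpow_of_lt (by linarith) one_pos).const_mul t
    apply Integrable.mono' hbase
    · exact ((hcont (Ioi 1) (fun x (hx : (1:ℝ) < x) => (lt_trans one_pos hx : (0:ℝ) < x))).aestronglyMeasurable measurableSet_Ioi)
    · filter_upwards [ae_restrict_mem measurableSet_Ioi] with l hl
      have hl1 : (1:ℝ) < l := hl
      have hl0 : 0 < l := lt_trans one_pos hl1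
      have h2 : 0 ≤ t / (t + l) := by positivity
      rw [norm_mul, norm_of_nonneg (rpow_nonneg hl0.le _), norm_of_nonneg h2]
      have key : t / (t + l) ≤ t / l :=
        div_le_div_of_nonneg_left ht.le hl0 (by linarith)
      calc l ^ (s-1) * (t / (t+l)) ≤ l ^ (s-1) * (t / l) :=
            mul_le_mul_of_nonneg_left key (rpow_nonneg hl0.le _)
        _ = t * l ^ (s-2) := by
            rw [div_eq_mul_inv, ← Real.rpow_neg_one l]
            rw [show s - 2 = (s-1) + (-1) by ring, Real.rpow_add hl0]
            ring

lemma lh_integral_aux {s : ℝ} (hs0 : 0 < s) (hs1 : s < 1) {t : ℝ} (ht : 0 < t) :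
    ∫ l in Ioi (0:ℝ), l ^ (s-1) * (t / (t + l))
      = t ^ s * ∫ l in Ioi (0:ℝ), l ^ (s-1) * (1 / (1 + l)) := by
  have h := integral_comp_mul_left_Ioi (fun l : ℝ => l ^ (s-1) * (t / (t + l))) 0 ht
  rw [mul_zero] at h
  have h2 : ∫ x in Ioi (0:ℝ), (t*x) ^ (s-1) * (t / (t + t*x))
      = t ^ (s-1) * ∫ x in Ioi (0:ℝ), x ^ (s-1) * (1 / (1 + x)) := by
    rw [← integral_const_mul]
    apply setIntegral_congr_fun measurableSet_Ioi
    intro x hx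
    have hx0 : 0 < x := hx
    simp only []
    rw [mul_rpow ht.le hx0.le]
    have : t / (t + t*x) = 1 / (1 + x) := by
      rw [show t + t*x = t * (1+x) by ring]
      field_simp
    rw [this]; ring
  rw [h2] at h
  have h3 := congrArg (fun z => t * z) h
  simp only [smul_eq_mul, ← mul_assoc, mul_inv_cancel₀ ht.ne', one_mul] at h3
  rw [← h3, show t * t ^ (s-1) = t ^ s by
    rw [show s = (s-1)+1 by ring, Real.rpow_add_one ht.ne']; ring]

lemma lh_I_pos {s : ℝ} (hs0 : 0 < s) (hs1 : s < 1) :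
    0 < ∫ l in Ioi (0:ℝ), l ^ (s-1) * (1 / (1 + l)) := by
  have hint : IntegrableOn (fun l : ℝ => l ^ (s-1) * ((1:ℝ) / (1 + l))) (Ioi 0) :=
    lh_integrableOn_aux hs0 hs1 one_pos
  have hnn : (0 : ℝ → ℝ) ≤ᶠ[ae (volume.restrict (Ioi 0))]
      fun l => l ^ (s-1) * (1 / (1 + l)) := by
    filter_upwards [ae_restrict_mem measurableSet_Ioi] with l hl
    have : (0:ℝ) < l := hl
    positivity
  rw [setIntegral_pos_iff_support_of_nonneg_ae hnn hint]
  refine lt_of_lt_of_le (b := volume (Ioi (1:ℝ))) (by simp [Real.volume_Ioi]) (measure_mono ?_)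
  intro x hx
  have hx1 : (1:ℝ) < x := hx
  have hx0 : 0 < x := lt_trans one_pos hx1
  refine ⟨?_, hx0⟩
  simp only [Function.mem_support]
  positivity

lemma lh_sq_ineq (a c : ℂ) (m : ℝ) (hm : 0 < m) :
    2 * ((starRingEnd ℂ) a * c).re ≤ Complex.normSq a / m + m * Complex.normSq c := by
  have h := Complex.normSq_nonneg (a - (m:ℂ) * c)
  rw [Complex.normSq_apply] at h
  simp only [Complex.sub_re, Complex.sub_im, Complex.mul_re, Complex.mul_im,
    Complex.ofReal_re, Complex.ofReal_im, Complex.normSq_apply, Complex.conj_re,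
    Complex.conj_im] at h ⊢
  rw [div_add' _ _ _ hm.ne', le_div_iff₀ hm]
  nlinarith [h]

end ScalarAux

section MatrixAux

open Matrix

variable {n : ℕ}

lemma lh_star_vecMul_eq (U : Matrix (Fin n) (Fin n) ℂ) (v : Fin n → ℂ) :
    star v ᵥ* U = star (star U *ᵥ v) := by
  ext i
  simp [vecMul, mulVec, dotProduct, Finset.sum_apply, mul_comm]

lemma lh_dot_invariant (U : Matrix (Fin n) (Fin n) ℂ) (hU : U * star U = 1) (v w : Fin n → ℂ) :
    star (star U *ᵥ v) ⬝ᵥ (star U *ᵥ w) = star v ⬝ᵥ w := by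
  rw [← lh_star_vecMul_eq, dotProduct_mulVec, vecMul_vecMul, hU]
  simp

lemma lh_quad_form_eq (U : Matrix (Fin n) (Fin n) ℂ) (d : Fin n → ℂ) (v : Fin n → ℂ) :
    star v ⬝ᵥ ((U * Matrix.diagonal d * star U) *ᵥ v)
      = ∑ i, d i * Complex.normSq ((star U *ᵥ v) i) := by
  rw [← mulVec_mulVec, ← mulVec_mulVec, dotProduct_mulVec (star v) U, lh_star_vecMul_eq]
  rw [dotProduct, Finset.sum_congr rfl]
  intro i _
  simp only [mulVec_diagonal, Pi.star_apply]
  rw [Complex.normSq_eq_conj_mul_self]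
  simp only [RCLike.star_def]
  ring

lemma lh_quad_form_real (U : Matrix (Fin n) (Fin n) ℂ) (f : Fin n → ℝ) (v : Fin n → ℂ) :
    star v ⬝ᵥ ((U * Matrix.diagonal (fun i => (f i : ℂ)) * star U) *ᵥ v)
      = ((∑ i, f i * Complex.normSq ((star U *ᵥ v) i) : ℝ) : ℂ) := by
  rw [lh_quad_form_eq]
  push_cast
  rfl

lemma lh_selfdot (x : Fin n → ℂ) :
    star x ⬝ᵥ x = ((∑ i, Complex.normSq (x i) : ℝ) : ℂ) := by
  rw [dotProduct]
  push_cast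
  refine Finset.sum_congr rfl fun i _ => ?_
  simp only [Pi.star_apply, RCLike.star_def]
  rw [Complex.normSq_eq_conj_mul_self]

end MatrixAux

section Main

open MeasureTheory Real Set Matrix

/-- Operator monotonicity of `x ↦ x^s`, `s ∈ [0,1]`, on positive semidefinite matrices:
if `X ≤ Y` (i.e. `Y − X` is positive semidefinite) then `X^s ≤ Y^s`. -/
theorem mpow_le_mpow_of_posSemidef_le {n : ℕ}
    (X Y : Matrix (Fin n) (Fin n) ℂ) (hX : X.PosSemidef) (hY : Y.PosSemidef)
    (hXY : (Y - X).PosSemidef) (s : ℝ) (hs : s ∈ Set.Icc (0 : ℝ) 1) :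
    (mpow Y s - mpow X s).PosSemidef := by
  obtain ⟨hs0', hs1'⟩ := hs
  rcases eq_or_lt_of_le hs0' with h0 | hs0
  · -- s = 0
    have e : ∀ (A : Matrix (Fin n) (Fin n) ℂ), A.IsHermitian → mpow A 0 = 1 := by
      intro A hA
      rw [mpow, cfcM, dif_pos hA]
      simp only [Real.rpow_zero, Complex.ofReal_one]
      rw [show Matrix.diagonal (fun _ : Fin n => (1:ℂ)) = (1 : Matrix (Fin n) (Fin n) ℂ) from Matrix.diagonal_one, mul_one]
      exact Unitary.mul_star_self_of_mem (SetLike.coe_mem _)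
    rw [← h0, e X hX.1, e Y hY.1, sub_self]
    exact Matrix.PosSemidef.zero
  rcases eq_or_lt_of_le hs1' with h1 | hs1
  · -- s = 1
    have e : ∀ (A : Matrix (Fin n) (Fin n) ℂ), A.IsHermitian → mpow A 1 = A := by
      intro A hA
      rw [mpow, cfcM, dif_pos hA]
      simp only [Real.rpow_one]
      have := hA.spectral_theorem
      rw [Unitary.conjStarAlgAut_apply] at this
      exact this.symm
    rw [h1, e X hX.1, e Y hY.1]
    exact hXY
  -- main case 0 < s < 1
  set U : Matrix (Fin n) (Fin n) ℂ := (hX.1.eigenvectorUnitary : Matrix (Fin n) (Fin n) ℂ)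
    with hU_def
  set V : Matrix (Fin n) (Fin n) ℂ := (hY.1.eigenvectorUnitary : Matrix (Fin n) (Fin n) ℂ)
    with hV_def
  set μ : Fin n → ℝ := hX.1.eigenvalues with hμ_def
  set ν : Fin n → ℝ := hY.1.eigenvalues with hν_def
  have hUU : U * star U = 1 := Unitary.mul_star_self_of_mem (SetLike.coe_mem _)
  have hVV : star V * V = 1 := Unitary.star_mul_self_of_mem (SetLike.coe_mem _)
  have hVV' : V * star V = 1 := Unitary.mul_star_self_of_mem (SetLike.coe_mem _)
  have hμ : ∀ i, 0 ≤ μ i := hX.eigenvalues_nonneg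
  have hν : ∀ j, 0 ≤ ν j := hY.eigenvalues_nonneg
  have specX : X = U * Matrix.diagonal (fun i => (μ i : ℂ)) * star U := by
    have := hX.1.spectral_theorem
    rw [Unitary.conjStarAlgAut_apply] at this
    exact this
  have specY : Y = V * Matrix.diagonal (fun j => (ν j : ℂ)) * star V := by
    have := hY.1.spectral_theorem
    rw [Unitary.conjStarAlgAut_apply] at this
    exact this
  have mpowX : mpow X s = U * Matrix.diagonal (fun i => ((μ i ^ s : ℝ) : ℂ)) * star U := by
    rw [mpow, cfcM, dif_pos hX.1]
  have mpowY : mpow Y s = V * Matrix.diagonal (fun j => ((ν j ^ s : ℝ) : ℂ)) * star V := by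
    rw [mpow, cfcM, dif_pos hY.1]
  -- monotonicity hypothesis in scalar form
  have hmono : ∀ w : Fin n → ℂ,
      (∑ i, μ i * Complex.normSq ((star U *ᵥ w) i))
        ≤ ∑ j, ν j * Complex.normSq ((star V *ᵥ w) j) := by
    intro w
    have h := hXY.dotProduct_mulVec_nonneg w
    rw [Matrix.sub_mulVec, dotProduct_sub] at h
    have eX : star w ⬝ᵥ (X *ᵥ w)
        = ((∑ i, μ i * Complex.normSq ((star U *ᵥ w) i) : ℝ) : ℂ) := by
      conv_lhs => rw [specX]
      exact lh_quad_form_real U μ w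
    have eY : star w ⬝ᵥ (Y *ᵥ w)
        = ((∑ j, ν j * Complex.normSq ((star V *ᵥ w) j) : ℝ) : ℂ) := by
      conv_lhs => rw [specY]
      exact lh_quad_form_real V ν w
    rw [eX, eY, ← Complex.ofReal_sub, Complex.zero_le_real, sub_nonneg] at h
    exact h
  -- the key per-vector inequality
  have key : ∀ v : Fin n → ℂ,
      (∑ i, (μ i ^ s) * Complex.normSq ((star U *ᵥ v) i))
        ≤ ∑ j, (ν j ^ s) * Complex.normSq ((star V *ᵥ v) j) := by
    intro v
    set a : Fin n → ℂ := star U *ᵥ v with ha_def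
    set b : Fin n → ℂ := star V *ᵥ v with hb_def
    set p : Fin n → ℝ := fun i => Complex.normSq (a i) with hp_def
    set q : Fin n → ℝ := fun j => Complex.normSq (b j) with hq_def
    have hp : ∀ i, 0 ≤ p i := fun i => Complex.normSq_nonneg _
    have hq : ∀ j, 0 ≤ q j := fun j => Complex.normSq_nonneg _
    have hpq : ∑ i, p i = ∑ j, q j := by
      have h1 : ((∑ i, p i : ℝ) : ℂ) = ((∑ j, q j : ℝ) : ℂ) := by
        rw [← lh_selfdot a, ← lh_selfdot b, ha_def, hb_def,
          lh_dot_invariant U hUU v v, lh_dot_invariant V hVV' v v]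
      exact_mod_cast h1
    -- G-inequality (monotonicity of the resolvent quadratic form)
    have hG : ∀ l : ℝ, 0 < l →
        (∑ j, q j * (ν j + l)⁻¹) ≤ ∑ i, p i * (μ i + l)⁻¹ := by
      intro l hl
      have hνl : ∀ j, 0 < ν j + l := fun j => by have := hν j; linarith
      have hμl : ∀ i, 0 < μ i + l := fun i => by have := hμ i; linarith
      set r : Fin n → ℝ := fun j => (ν j + l)⁻¹ with hr_def
      set w : Fin n → ℂ := V *ᵥ (fun j => b j * (r j : ℂ)) with hw_def
      set c : Fin n → ℂ := star U *ᵥ w with hc_def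
      have hVw : star V *ᵥ w = fun j => b j * (r j : ℂ) := by
        rw [hw_def, Matrix.mulVec_mulVec, hVV, Matrix.one_mulVec]
      have hdot : star a ⬝ᵥ c = ((∑ j, q j * r j : ℝ) : ℂ) := by
        rw [ha_def, hc_def, lh_dot_invariant U hUU v w, ← lh_dot_invariant V hVV' v w,
          ← hb_def, hVw, dotProduct]
        push_cast
        refine Finset.sum_congr rfl fun j _ => ?_
        simp only [Pi.star_apply, RCLike.star_def]
        rw [show (starRingEnd ℂ) (b j) * (b j * ((r j : ℝ):ℂ))
            = ((starRingEnd ℂ) (b j) * b j) * ((r j : ℝ):ℂ) by ring,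
          ← Complex.normSq_eq_conj_mul_self]
      have hcnorm : ∑ i, Complex.normSq (c i) = ∑ j, q j * (r j)^2 := by
        have h1 : ((∑ i, Complex.normSq (c i) : ℝ) : ℂ)
            = ((∑ j, q j * (r j)^2 : ℝ) : ℂ) := by
          rw [← lh_selfdot c, hc_def, lh_dot_invariant U hUU w w,
            ← lh_dot_invariant V hVV' w w, hVw, lh_selfdot]
          norm_cast
          refine Finset.sum_congr rfl fun j _ => ?_
          rw [Complex.normSq_mul, Complex.normSq_ofReal]
          ring
        exact_mod_cast h1
      have hm := hmono w
      have hVw2 : ∑ j, ν j * Complex.normSq ((star V *ᵥ w) j)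
          = ∑ j, ν j * (q j * (r j)^2) := by
        rw [hVw]
        refine Finset.sum_congr rfl fun j _ => ?_
        rw [Complex.normSq_mul, Complex.normSq_ofReal]
        ring
      rw [hVw2] at hm
      -- hm : ∑ i, μ i * normSq (c i) ≤ ∑ j, ν j * (q j * r j ^ 2)
      have hre : (star a ⬝ᵥ c).re = ∑ j, q j * r j := by rw [hdot, Complex.ofReal_re]
      have hre2 : (star a ⬝ᵥ c).re = ∑ i, ((starRingEnd ℂ) (a i) * c i).re := by
        rw [dotProduct, Complex.re_sum]
        refine Finset.sum_congr rfl fun i _ => ?_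
        simp [Pi.star_apply, RCLike.star_def]
      have e2 : ∑ j, (ν j * (q j * (r j)^2) + l * (q j * (r j)^2)) = ∑ j, q j * r j := by
        refine Finset.sum_congr rfl fun j _ => ?_
        have h1 : (ν j + l) * r j = 1 := mul_inv_cancel₀ (hνl j).ne'
        calc ν j * (q j * (r j)^2) + l * (q j * (r j)^2)
            = ((ν j + l) * r j) * (q j * r j) := by ring
          _ = q j * r j := by rw [h1]; ring
      have fact2 : ∑ i, (μ i * Complex.normSq (c i) + l * Complex.normSq (c i))
          ≤ ∑ j, q j * r j := by
        rw [← e2, Finset.sum_add_distrib, Finset.sum_add_distrib,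
          ← Finset.mul_sum, ← Finset.mul_sum, hcnorm]
        exact add_le_add_left hm _
      have fact3 : 2 * (∑ i, ((starRingEnd ℂ) (a i) * c i).re)
          - ∑ i, (μ i * Complex.normSq (c i) + l * Complex.normSq (c i))
          ≤ ∑ i, p i * (μ i + l)⁻¹ := by
        have h1 : ∀ i ∈ Finset.univ,
            2 * ((starRingEnd ℂ) (a i) * c i).re
              - (μ i * Complex.normSq (c i) + l * Complex.normSq (c i))
              ≤ p i * (μ i + l)⁻¹ := by
          intro i _
          have := lh_sq_ineq (a i) (c i) (μ i + l) (hμl i)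
          rw [div_eq_mul_inv] at this
          have h2 : (μ i + l) * Complex.normSq (c i)
              = μ i * Complex.normSq (c i) + l * Complex.normSq (c i) := by ring
          rw [h2] at this
          rw [hp_def]
          linarith
        calc 2 * (∑ i, ((starRingEnd ℂ) (a i) * c i).re)
            - ∑ i, (μ i * Complex.normSq (c i) + l * Complex.normSq (c i))
            = ∑ i, (2 * ((starRingEnd ℂ) (a i) * c i).re
              - (μ i * Complex.normSq (c i) + l * Complex.normSq (c i))) := by
              rw [Finset.sum_sub_distrib, Finset.mul_sum]
          _ ≤ _ := Finset.sum_le_sum h1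
      have hA12 : ∑ i, ((starRingEnd ℂ) (a i) * c i).re = ∑ j, q j * r j := by
        rw [← hre2, hre]
      rw [hr_def] at *
      linarith [fact2, fact3, hA12]
    -- F-inequality
    have hF : ∀ l : ℝ, 0 < l →
        (∑ i, p i * (μ i / (μ i + l))) ≤ ∑ j, q j * (ν j / (ν j + l)) := by
      intro l hl
      have hνl : ∀ j, 0 < ν j + l := fun j => by have := hν j; linarith
      have hμl : ∀ i, 0 < μ i + l := fun i => by have := hμ i; linarith
      have ex : ∑ i, p i * (μ i / (μ i + l))
          = (∑ i, p i) - l * ∑ i, p i * (μ i + l)⁻¹ := by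
        rw [Finset.mul_sum, ← Finset.sum_sub_distrib]
        refine Finset.sum_congr rfl fun i _ => ?_
        field_simp [(hμl i).ne']
        ring
      have ey : ∑ j, q j * (ν j / (ν j + l))
          = (∑ j, q j) - l * ∑ j, q j * (ν j + l)⁻¹ := by
        rw [Finset.mul_sum, ← Finset.sum_sub_distrib]
        refine Finset.sum_congr rfl fun j _ => ?_
        field_simp [(hνl j).ne']
        ring
      rw [ex, ey, hpq]
      have h2 := mul_le_mul_of_nonneg_left (hG l hl) hl.le
      linarith
    -- integration
    set I := ∫ l in Ioi (0:ℝ), l ^ (s-1) * (1 / (1 + l)) with hI_def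
    have hIpos : 0 < I := lh_I_pos hs0 hs1
    have hint_t : ∀ t : ℝ, 0 ≤ t →
        IntegrableOn (fun l : ℝ => l ^ (s-1) * (t / (t + l))) (Ioi 0) := by
      intro t ht
      rcases eq_or_lt_of_le ht with h | h
      · have : (fun l : ℝ => l ^ (s-1) * (t / (t + l))) = fun _ => 0 := by
          funext l
          rw [← h]
          simp
        rw [this]
        exact integrableOn_zero
      · exact lh_integrableOn_aux hs0 hs1 h
    have hval_t : ∀ t : ℝ, 0 ≤ t →
        ∫ l in Ioi (0:ℝ), l ^ (s-1) * (t / (t + l)) = t ^ s * I := by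
      intro t ht
      rcases eq_or_lt_of_le ht with h | h
      · have : (fun l : ℝ => l ^ (s-1) * (t / (t + l))) = fun _ => 0 := by
          funext l
          rw [← h]
          simp
        rw [this, ← h, Real.zero_rpow hs0.ne']
        simp
      · exact lh_integral_aux hs0 hs1 h
    have rwX : (fun l : ℝ => l ^ (s-1) * (∑ i, p i * (μ i / (μ i + l))))
        = fun l : ℝ => ∑ i, p i * (l ^ (s-1) * (μ i / (μ i + l))) := by
      funext l
      rw [Finset.mul_sum]
      exact Finset.sum_congr rfl fun i _ => by ring
    have rwY : (fun l : ℝ => l ^ (s-1) * (∑ j, q j * (ν j / (ν j + l))))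
        = fun l : ℝ => ∑ j, q j * (l ^ (s-1) * (ν j / (ν j + l))) := by
      funext l
      rw [Finset.mul_sum]
      exact Finset.sum_congr rfl fun j _ => by ring
    have hintX : IntegrableOn
        (fun l : ℝ => l ^ (s-1) * (∑ i, p i * (μ i / (μ i + l)))) (Ioi 0) := by
      rw [rwX]
      exact integrable_finset_sum _ fun i _ => ((hint_t (μ i) (hμ i)).const_mul (p i))
    have hintY : IntegrableOn
        (fun l : ℝ => l ^ (s-1) * (∑ j, q j * (ν j / (ν j + l)))) (Ioi 0) := by
      rw [rwY]
      exact integrable_finset_sum _ fun j _ => ((hint_t (ν j) (hν j)).const_mul (q j))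
    have hvalX : ∫ l in Ioi (0:ℝ), l ^ (s-1) * (∑ i, p i * (μ i / (μ i + l)))
        = (∑ i, p i * μ i ^ s) * I := by
      rw [rwX, integral_finset_sum _ fun i _ => ((hint_t (μ i) (hμ i)).const_mul (p i)),
        Finset.sum_mul]
      refine Finset.sum_congr rfl fun i _ => ?_
      rw [integral_const_mul, hval_t (μ i) (hμ i)]
      ring
    have hvalY : ∫ l in Ioi (0:ℝ), l ^ (s-1) * (∑ j, q j * (ν j / (ν j + l)))
        = (∑ j, q j * ν j ^ s) * I := by
      rw [rwY, integral_finset_sum _ fun j _ => ((hint_t (ν j) (hν j)).const_mul (q j)),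
        Finset.sum_mul]
      refine Finset.sum_congr rfl fun j _ => ?_
      rw [integral_const_mul, hval_t (ν j) (hν j)]
      ring
    have hcomp : (∑ i, p i * μ i ^ s) * I ≤ (∑ j, q j * ν j ^ s) * I := by
      rw [← hvalX, ← hvalY]
      refine setIntegral_mono_on hintX hintY measurableSet_Ioi fun l hl => ?_
      have hl0 : (0:ℝ) < l := hl
      exact mul_le_mul_of_nonneg_left (hF l hl0) (Real.rpow_nonneg hl0.le _)
    have := le_of_mul_le_mul_right hcomp hIpos
    calc ∑ i, (μ i ^ s) * Complex.normSq ((star U *ᵥ v) i)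
        = ∑ i, p i * μ i ^ s := Finset.sum_congr rfl fun i _ => by rw [hp_def]; ring
      _ ≤ ∑ j, q j * ν j ^ s := this
      _ = ∑ j, (ν j ^ s) * Complex.normSq ((star V *ᵥ v) j) :=
          Finset.sum_congr rfl fun j _ => by rw [hq_def]; ring
  -- assemble
  refine Matrix.PosSemidef.of_dotProduct_mulVec_nonneg ?_ ?_
  · have hermX : (mpow X s).IsHermitian := by
      rw [mpowX, Matrix.star_eq_conjTranspose]
      exact Matrix.isHermitian_mul_mul_conjTranspose U
        (Matrix.isHermitian_diagonal_of_self_adjoint _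
          (funext fun i => by simp [Complex.star_def, Complex.conj_ofReal]))
    have hermY : (mpow Y s).IsHermitian := by
      rw [mpowY, Matrix.star_eq_conjTranspose]
      exact Matrix.isHermitian_mul_mul_conjTranspose V
        (Matrix.isHermitian_diagonal_of_self_adjoint _
          (funext fun j => by simp [Complex.star_def, Complex.conj_ofReal]))
    exact hermY.sub hermX
  · intro v
    rw [Matrix.sub_mulVec, dotProduct_sub]
    have eX : star v ⬝ᵥ (mpow X s *ᵥ v)
        = ((∑ i, (μ i ^ s) * Complex.normSq ((star U *ᵥ v) i) : ℝ) : ℂ) := by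
      rw [mpowX]
      exact lh_quad_form_real U (fun i => μ i ^ s) v
    have eY : star v ⬝ᵥ (mpow Y s *ᵥ v)
        = ((∑ j, (ν j ^ s) * Complex.normSq ((star V *ᵥ v) j) : ℝ) : ℂ) := by
      rw [mpowY]
      exact lh_quad_form_real V (fun j => ν j ^ s) v
    rw [eX, eY, ← Complex.ofReal_sub, Complex.zero_le_real, sub_nonneg]
    exact key v

end Main
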